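/- Let μ, σ̄, R, γ > 0 and for integers k ≥ 0 define Λ_k(γ) := (μσ̄/R)·[γ·(h_k(R) + j_k(R)) − j_k(R)·R]. Then lim_{k→∞} Λ_k(γ) = +∞. -/

import Mathlib

set_option maxHeartbeats 1000000
open Real Filter


/-- The modified Bessel function of the first kind of order `m`:
`I_m(r) = ∑ (r/2)^(m+2n) / (n! Γ(m+n+1))`. -/
noncomputable def besselI (m r : ℝ) : ℝ :=
  ∑' n : ℕ, (r / 2) ^ (m + 2 * (n : ℝ)) / ((n.factorial : ℝ) * Real.Gamma (m + (n : ℝ) + 1))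

lemma gamma_mono (m : ℝ) (hm : 0 ≤ m) (n : ℕ) : Gamma (m+1) ≤ Gamma (m + (n:ℝ) + 1) := by
  induction n with
  | zero => simp
  | succ n ih =>
    have h1 : (0:ℝ) < m + n + 1 := by positivity
    have h2 : Gamma (m + ((n:ℕ)+1:ℕ) + 1 : ℝ) = (m + n + 1) * Gamma (m + n + 1) := by
      rw [show (m + (((n:ℕ)+1:ℕ):ℝ) + 1 : ℝ) = (m + n + 1) + 1 by push_cast; ring,
        Real.Gamma_add_one (ne_of_gt h1)]
    have h3 : (0:ℝ) < Gamma (m + n + 1) := Gamma_pos_of_pos h1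
    calc Gamma (m+1) ≤ Gamma (m + n + 1) := ih
      _ ≤ (m + n + 1) * Gamma (m + n + 1) := by nlinarith
      _ = _ := h2.symm

lemma term_eq (m R : ℝ) (hR : 0 < R) (n : ℕ) :
    (R/2) ^ (m + 2*(n:ℝ)) = (R/2)^m * ((R/2)^2)^n := by
  rw [Real.rpow_add (by positivity), Real.rpow_mul (by positivity)]
  norm_num [Real.rpow_natCast, Real.rpow_two]

lemma term_pos (m R : ℝ) (hm : 0 ≤ m) (hR : 0 < R) (n : ℕ) :
    0 < (R/2) ^ (m + 2*(n:ℝ)) / ((n.factorial : ℝ) * Gamma (m + (n:ℝ) + 1)) := by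
  have h1 : (0:ℝ) < m + n + 1 := by positivity
  have := Gamma_pos_of_pos h1
  have : (0:ℝ) < n.factorial := by positivity
  positivity

lemma bessel_summable (m R : ℝ) (hm : 0 ≤ m) (hR : 0 < R) :
    Summable (fun n : ℕ => (R/2) ^ (m + 2*(n:ℝ)) / ((n.factorial : ℝ) * Gamma (m + (n:ℝ) + 1))) := by
  have hG : 0 < Gamma (m+1) := Gamma_pos_of_pos (by positivity)
  apply Summable.of_nonneg_of_le (fun n => le_of_lt (term_pos m R hm hR n))
    (f := fun n => ((R/2)^m / Gamma (m+1)) * (((R/2)^2)^n / n.factorial))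
  · intro n
    have h1 : (0:ℝ) < m + n + 1 := by positivity
    have hGn : 0 < Gamma (m + n + 1) := Gamma_pos_of_pos h1
    have hG1 : 0 < Gamma (m + 1) := Gamma_pos_of_pos (by positivity)
    have hmono := gamma_mono m hm n
    have hf : (0:ℝ) < n.factorial := by positivity
    rw [term_eq m R hR n]
    calc (R/2)^m * ((R/2)^2)^n / ((n.factorial:ℝ) * Gamma (m+(n:ℝ)+1))
        ≤ (R/2)^m * ((R/2)^2)^n / ((n.factorial:ℝ) * Gamma (m+1)) := by
          apply div_le_div_of_nonneg_left (by positivity) (by positivity)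
          exact mul_le_mul_of_nonneg_left hmono hf.le
      _ = ((R/2)^m / Gamma (m+1)) * (((R/2)^2)^n / n.factorial) := by ring
  · exact ((Real.summable_pow_div_factorial ((R/2)^2)).mul_left _)

lemma term_le (m R : ℝ) (hm : 0 ≤ m) (hR : 0 < R) (n : ℕ) :
    (R/2) ^ (m + 2*(n:ℝ)) / ((n.factorial : ℝ) * Gamma (m + (n:ℝ) + 1))
      ≤ ((R/2)^m / Gamma (m+1)) * (((R/2)^2)^n / n.factorial) := by
  have h1 : (0:ℝ) < m + n + 1 := by positivity
  have hGn : 0 < Gamma (m + n + 1) := Gamma_pos_of_pos h1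
  have hG1 : 0 < Gamma (m + 1) := Gamma_pos_of_pos (by positivity)
  have hmono := gamma_mono m hm n
  have hf : (0:ℝ) < n.factorial := by positivity
  rw [term_eq m R hR n]
  calc (R/2)^m * ((R/2)^2)^n / ((n.factorial:ℝ) * Gamma (m+(n:ℝ)+1))
      ≤ (R/2)^m * ((R/2)^2)^n / ((n.factorial:ℝ) * Gamma (m+1)) := by
        apply div_le_div_of_nonneg_left (by positivity) (by positivity)
        exact mul_le_mul_of_nonneg_left hmono hf.le
    _ = ((R/2)^m / Gamma (m+1)) * (((R/2)^2)^n / n.factorial) := by ring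

lemma besselI_pos (m R : ℝ) (hm : 0 ≤ m) (hR : 0 < R) : 0 < besselI m R :=
  Summable.tsum_pos (bessel_summable m R hm hR) (fun n => (term_pos m R hm hR n).le) 0
    (term_pos m R hm hR 0)

lemma besselI_succ_le (m R : ℝ) (hm : 0 ≤ m) (hR : 0 < R) :
    besselI (m+1) R ≤ (R/2)/(m+1) * besselI m R := by
  unfold besselI
  rw [← tsum_mul_left]
  apply Summable.tsum_le_tsum _ (bessel_summable (m+1) R (by linarith) hR)
    ((bessel_summable m R hm hR).mul_left _)
  intro n
  have h1 : (0:ℝ) < m + n + 1 := by positivity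
  have hGn : 0 < Gamma (m + n + 1) := Gamma_pos_of_pos h1
  have hf : (0:ℝ) < n.factorial := by positivity
  have e1 : (R/2 : ℝ)^(m+1+2*(n:ℝ)) = (R/2)^(m+2*(n:ℝ)) * (R/2) := by
    rw [show m+1+2*(n:ℝ) = (m+2*(n:ℝ))+1 by ring, Real.rpow_add_one (by positivity)]
  have e2 : Gamma (m+1+(n:ℝ)+1) = (m+(n:ℝ)+1) * Gamma (m+(n:ℝ)+1) := by
    rw [show m+1+(n:ℝ)+1 = (m+(n:ℝ)+1)+1 by ring, Real.Gamma_add_one (ne_of_gt h1)]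
  rw [e1, e2]
  have hA : (0:ℝ) ≤ (R/2)^(m+2*(n:ℝ)) := by positivity
  calc (R/2)^(m+2*(n:ℝ)) * (R/2) / ((n.factorial:ℝ) * ((m+(n:ℝ)+1) * Gamma (m+(n:ℝ)+1)))
      = ((R/2)^(m+2*(n:ℝ)) / ((n.factorial:ℝ) * Gamma (m+(n:ℝ)+1))) * ((R/2)/(m+(n:ℝ)+1)) := by
        field_simp
    _ ≤ ((R/2)^(m+2*(n:ℝ)) / ((n.factorial:ℝ) * Gamma (m+(n:ℝ)+1))) * ((R/2)/(m+1)) := by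
        apply mul_le_mul_of_nonneg_left _ (by positivity)
        exact div_le_div_of_nonneg_left (by positivity) (by positivity) (by linarith)
    _ = (R/2)/(m+1) * ((R/2)^(m+2*(n:ℝ)) / ((n.factorial:ℝ) * Gamma (m+(n:ℝ)+1))) := by ring

lemma besselI_ge (m R : ℝ) (hm : 0 ≤ m) (hR : 0 < R) :
    (R/2)^m / Gamma (m+1) ≤ besselI m R := by
  have h := Summable.le_tsum (bessel_summable m R hm hR) 0
    (fun j _ => (term_pos m R hm hR j).le)
  simpa [besselI] using h

lemma besselI_le (m R : ℝ) (hm : 0 ≤ m) (hR : 0 < R) :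
    besselI m R ≤ ((R/2)^m / Gamma (m+1)) * (∑' n : ℕ, ((R/2)^2)^n / (n.factorial : ℝ)) := by
  unfold besselI
  rw [← tsum_mul_left]
  exact Summable.tsum_le_tsum (term_le m R hm hR) (bessel_summable m R hm hR)
    ((Real.summable_pow_div_factorial ((R/2)^2)).mul_left _)

lemma Ec_ge_one (R : ℝ) : (1:ℝ) ≤ ∑' n : ℕ, ((R/2)^2)^n / (n.factorial : ℝ) := by
  have h := Summable.le_tsum (Real.summable_pow_div_factorial ((R/2)^2)) 0
    (fun j _ => by positivity)
  simpa using h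

/-- `h_k(R) = ((k²+k)/2 - 1)·I_{k+3/2}(R)/(R·I_{k+1/2}(R))`. -/
noncomputable def hfun (k : ℕ) (R : ℝ) : ℝ :=
  (((k : ℝ) ^ 2 + k) / 2 - 1) * (besselI ((k : ℝ) + 3 / 2) R / (R * besselI ((k : ℝ) + 1 / 2) R))

/-- `j_k(R) = 1 - 3 I_{3/2}(R)/(R I_{1/2}(R)) - I_{3/2}(R) I_{k+3/2}(R)/(I_{1/2}(R) I_{k+1/2}(R))`. -/
noncomputable def jfun (k : ℕ) (R : ℝ) : ℝ :=
  1 - 3 * besselI (3 / 2) R / (R * besselI (1 / 2) R)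
    - besselI (3 / 2) R * besselI ((k : ℝ) + 3 / 2) R
      / (besselI (1 / 2) R * besselI ((k : ℝ) + 1 / 2) R)

/-- The eigenvalue `Λ_k(γ) = (μσ̄/R)·[γ·(h_k(R)+j_k(R)) - j_k(R)·R]`. -/
noncomputable def Lam (μ σb R γ : ℝ) (k : ℕ) : ℝ :=
  (μ * σb / R) * (γ * (hfun k R + jfun k R) - jfun k R * R)

/-- `Λ_k(γ) → +∞` as `k → ∞`. -/
theorem stmt10 (μ σb R γ : ℝ) (hμ : 0 < μ) (hσb : 0 < σb) (hR : 0 < R) (hγ : 0 < γ) :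
    Filter.Tendsto (fun k : ℕ => Lam μ σb R γ k) Filter.atTop Filter.atTop := by
  set Ec : ℝ := ∑' n : ℕ, ((R/2)^2)^n / (n.factorial : ℝ) with hEcdef
  have hEc1 : (1:ℝ) ≤ Ec := Ec_ge_one R
  have hEc : (0:ℝ) < Ec := lt_of_lt_of_le one_pos hEc1
  have hB1 : 0 < besselI (1/2) R := besselI_pos _ R (by norm_num) hR
  have hB3 : 0 < besselI (3/2) R := besselI_pos _ R (by norm_num) hR
  set B1 := besselI (1/2) R
  set B3 := besselI (3/2) R
  set c : ℝ := μ * σb / R with hcdef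
  have hc : 0 < c := by positivity
  set C0 : ℝ := 1 - 3 * B3 / (R * B1) - B3 * R / (3 * B1) with hC0def
  -- ratio bounds for each k
  have hI1 : ∀ k : ℕ, 0 < besselI ((k:ℝ) + 1/2) R := fun k =>
    besselI_pos _ R (by positivity) hR
  have hI2 : ∀ k : ℕ, 0 < besselI ((k:ℝ) + 3/2) R := fun k =>
    besselI_pos _ R (by positivity) hR
  have hsucc : ∀ k : ℕ, besselI ((k:ℝ) + 3/2) R ≤ (R/3) * besselI ((k:ℝ) + 1/2) R := by
    intro k
    have h := besselI_succ_le ((k:ℝ)+1/2) R (by positivity) hR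
    have e : ((k:ℝ)+1/2)+1 = (k:ℝ)+3/2 := by ring
    rw [e] at h
    refine h.trans ?_
    apply mul_le_mul_of_nonneg_right _ (hI1 k).le
    rw [div_le_div_iff₀ (by positivity) (by norm_num)]
    nlinarith [Nat.cast_nonneg (α := ℝ) k, hR]
  have hratlo : ∀ k : ℕ, (R/2) * besselI ((k:ℝ) + 1/2) R
      ≤ (((k:ℝ)+3/2) * Ec) * besselI ((k:ℝ) + 3/2) R := by
    intro k
    have hm : (0:ℝ) ≤ (k:ℝ)+1/2 := by positivity
    have hG1 : 0 < Gamma ((k:ℝ)+1/2+1) := Gamma_pos_of_pos (by positivity)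
    have hup := besselI_le ((k:ℝ)+1/2) R hm hR
    have hlo := besselI_ge ((k:ℝ)+3/2) R (by positivity) hR
    have e1 : (R/2:ℝ)^((k:ℝ)+3/2) = (R/2)^((k:ℝ)+1/2) * (R/2) := by
      rw [show (k:ℝ)+3/2 = ((k:ℝ)+1/2)+1 by ring, Real.rpow_add_one (by positivity)]
    have e2 : Gamma ((k:ℝ)+3/2+1) = ((k:ℝ)+3/2) * Gamma ((k:ℝ)+1/2+1) := by
      rw [show (k:ℝ)+3/2+1 = ((k:ℝ)+1/2+1)+1 by ring, Real.Gamma_add_one (by positivity)]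
      ring_nf
    rw [e1, e2] at hlo
    have hP : (0:ℝ) < (R/2)^((k:ℝ)+1/2) := by positivity
    calc (R/2) * besselI ((k:ℝ) + 1/2) R
        ≤ (R/2) * (((R/2)^((k:ℝ)+1/2) / Gamma ((k:ℝ)+1/2+1)) * Ec) := by
          apply mul_le_mul_of_nonneg_left hup (by positivity)
      _ = (((k:ℝ)+3/2) * Ec) * ((R/2)^((k:ℝ)+1/2) * (R/2) / (((k:ℝ)+3/2) * Gamma ((k:ℝ)+1/2+1))) := by
          field_simp
      _ ≤ (((k:ℝ)+3/2) * Ec) * besselI ((k:ℝ) + 3/2) R := by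
          apply mul_le_mul_of_nonneg_left hlo (by positivity)
  -- jfun bounds
  have hj_le : ∀ k : ℕ, jfun k R ≤ 1 := by
    intro k
    have h1 : 0 ≤ 3 * B3 / (R * B1) := by positivity
    have h2 : 0 ≤ B3 * besselI ((k:ℝ)+3/2) R / (B1 * besselI ((k:ℝ)+1/2) R) := by
      have := hI1 k; have := hI2 k; positivity
    unfold jfun
    linarith
  have hj_ge : ∀ k : ℕ, C0 ≤ jfun k R := by
    intro k
    have h2 : B3 * besselI ((k:ℝ)+3/2) R / (B1 * besselI ((k:ℝ)+1/2) R) ≤ B3 * R / (3 * B1) := by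
      have hI1k := hI1 k
      calc B3 * besselI ((k:ℝ)+3/2) R / (B1 * besselI ((k:ℝ)+1/2) R)
          ≤ B3 * ((R/3) * besselI ((k:ℝ)+1/2) R) / (B1 * besselI ((k:ℝ)+1/2) R) := by
            gcongr
            exact hsucc k
        _ = B3 * R / (3 * B1) := by
            rw [div_eq_div_iff (by positivity) (by positivity)]
            ring
    unfold jfun
    rw [hC0def]
    linarith
  -- hfun lower bound
  have hh_ge : ∀ k : ℕ, 2 ≤ k → (k:ℝ)/(8*Ec) ≤ hfun k R := by
    intro k hk
    have hk2 : (2:ℝ) ≤ (k:ℝ) := by exact_mod_cast hk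
    have hI1k := hI1 k
    have hI2k := hI2 k
    have hrat : 1/((2*(k:ℝ)+3)*Ec) ≤ besselI ((k:ℝ)+3/2) R / (R * besselI ((k:ℝ)+1/2) R) := by
      rw [div_le_div_iff₀ (by positivity) (by positivity)]
      have := hratlo k
      nlinarith
    have hC : (0:ℝ) ≤ ((k:ℝ)^2 + k)/2 - 1 := by nlinarith
    calc (k:ℝ)/(8*Ec) ≤ (((k:ℝ)^2 + k)/2 - 1) * (1/((2*(k:ℝ)+3)*Ec)) := by
          rw [mul_one_div, div_le_div_iff₀ (by positivity) (by positivity)]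
          nlinarith [mul_nonneg hEc.le (by nlinarith : (0:ℝ) ≤ 2*(k:ℝ)^2 + (k:ℝ) - 8)]
      _ ≤ (((k:ℝ)^2 + k)/2 - 1) * (besselI ((k:ℝ)+3/2) R / (R * besselI ((k:ℝ)+1/2) R)) := by
          exact mul_le_mul_of_nonneg_left hrat hC
      _ = hfun k R := rfl
  clear_value Ec B1 B3 c C0
  -- assemble
  have key : ∀ k : ℕ, 2 ≤ k → c*γ/(8*Ec) * (k:ℝ) + c*(γ*C0 - R) ≤ Lam μ σb R γ k := by
    intro k hk
    have h1 := hh_ge k hk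
    have h2 := hj_ge k
    have h3 := hj_le k
    have : γ * (hfun k R + jfun k R) - jfun k R * R ≥ γ*((k:ℝ)/(8*Ec)) + γ*C0 - R := by
      nlinarith [mul_le_mul_of_nonneg_left h1 hγ.le, mul_le_mul_of_nonneg_left h2 hγ.le,
        mul_le_mul_of_nonneg_left h3 hR.le]
    calc c*γ/(8*Ec) * (k:ℝ) + c*(γ*C0 - R)
        = c * (γ*((k:ℝ)/(8*Ec)) + γ*C0 - R) := by field_simp; ring
      _ ≤ c * (γ * (hfun k R + jfun k R) - jfun k R * R) := by
          apply mul_le_mul_of_nonneg_left (by linarith) hc.le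
      _ = Lam μ σb R γ k := by rw [Lam, hcdef]
  have hlin : Tendsto (fun k : ℕ => c*γ/(8*Ec) * (k:ℝ) + c*(γ*C0 - R)) atTop atTop := by
    apply tendsto_atTop_add_const_right
    exact (tendsto_natCast_atTop_atTop).const_mul_atTop (by positivity)
  apply tendsto_atTop_mono' _ _ hlin
  filter_upwards [eventually_ge_atTop 2] with k hk using key k hk
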